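/- arXiv:math/0510556 — 2 statements merged into one kernel-verified Lean document; each statement's English description precedes it below -/
import Mathlib

section
/- Let X = ℤ^d and P the kernel with p(x, x+e_i) = p_i^+, p(x, x-e_i) = p_i^-, where Σ_i (p_i^+ + p_i^-) = 1 and P is irreducible. Then ρ(P) = 2 Σ_{i=1}^d √(p_i^+ p_i^-). -/
open Filter
open scoped ENNReal

/-- `matPow p n x y` is the `(x,y)` entry of the `n`-th matrix power of the kernel `p`,
i.e. the `n`-step transition probability `p^{(n)}(x,y)`. -/
noncomputable def matPow {X : Type} [DecidableEq X] (p : X → X → ℝ) : ℕ → X → X → ℝ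
  | 0, x, y => if x = y then 1 else 0
  | n + 1, x, y => ∑' z, p x z * matPow p n z y

/-- `p` is a stochastic kernel: nonnegative entries and rows summing to `1`. -/
def IsStochastic {X : Type} (p : X → X → ℝ) : Prop :=
  (∀ x y, 0 ≤ p x y) ∧ ∀ x, HasSum (p x) 1

/-- Irreducibility: any state can be reached from any state in some number of steps. -/
def IsIrreducibleKernel {X : Type} [DecidableEq X] (p : X → X → ℝ) : Prop :=
  ∀ x y, ∃ n, 0 < matPow p n x y

/-- The spectral radius `ρ(P) = limsup_n p^{(n)}(x,x)^{1/n}`. -/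
noncomputable def specRad {X : Type} [DecidableEq X] (p : X → X → ℝ) (x : X) : ℝ :=
  limsup (fun n => (matPow p n x x) ^ ((n : ℝ)⁻¹)) atTop

namespace SRW

variable {d : ℕ}

/-- The nearest-neighbour kernel with weights `a` (up) and `b` (down). -/
def ker (a b : Fin d → ℝ) (x y : Fin d → ℤ) : ℝ :=
  ∑ i, ((if y = x + Pi.single i 1 then a i else 0) +
        (if y = x - Pi.single i 1 then b i else 0))

/-- The `ℓ∞` ball of radius `n` around `x`, as a finset. -/
noncomputable def ball (n : ℕ) (x : Fin d → ℤ) : Finset (Fin d → ℤ) :=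
  Finset.Icc (fun j => x j - n) (fun j => x j + n)

lemma mem_ball {n : ℕ} {x y : Fin d → ℤ} :
    y ∈ ball n x ↔ ∀ j, x j - n ≤ y j ∧ y j ≤ x j + n := by
  simp [ball, Finset.mem_Icc, Pi.le_def, forall_and]

lemma self_mem_ball (n : ℕ) (x : Fin d → ℤ) : x ∈ ball n x := by
  rw [mem_ball]; intro j; constructor <;> omega

lemma add_single_ne_sub_single (x : Fin d → ℤ) (i : Fin d) :
    x + Pi.single i 1 ≠ x - Pi.single i 1 := by
  intro h
  have h2 := congrFun h i
  simp only [Pi.add_apply, Pi.sub_apply, Pi.single_eq_same] at h2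
  omega

lemma ker_ne_zero {a b : Fin d → ℝ} {x y : Fin d → ℤ} (h : ker a b x y ≠ 0) :
    ∃ i, (y = x + Pi.single i 1 ∧ a i ≠ 0) ∨ (y = x - Pi.single i 1 ∧ b i ≠ 0) := by
  obtain ⟨i, -, hi⟩ := Finset.exists_ne_zero_of_sum_ne_zero h
  refine ⟨i, ?_⟩
  have hns := add_single_ne_sub_single x i
  by_cases h1 : y = x + Pi.single i 1
  · subst h1
    rw [if_pos rfl, if_neg hns, add_zero] at hi
    exact Or.inl ⟨rfl, hi⟩
  by_cases h2 : y = x - Pi.single i 1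
  · subst h2
    rw [if_pos rfl, if_neg (Ne.symm hns), zero_add] at hi
    exact Or.inr ⟨rfl, hi⟩
  · rw [if_neg h1, if_neg h2, add_zero] at hi
    exact absurd rfl hi

lemma ker_mem_ball {a b : Fin d → ℝ} {x y : Fin d → ℤ} (h : ker a b x y ≠ 0) :
    y ∈ ball 1 x := by
  obtain ⟨i, hi | hi⟩ := ker_ne_zero h <;>
  · rw [mem_ball]
    intro j
    rcases hi with ⟨rfl, -⟩
    by_cases hj : j = i <;> simp [hj, Pi.single_apply] <;> omega

lemma matPow_ne_zero_mem_ball {a b : Fin d → ℝ} :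
    ∀ (n : ℕ) (x y : Fin d → ℤ), matPow (ker a b) n x y ≠ 0 → y ∈ ball n x := by
  intro n
  induction n with
  | zero =>
    intro x y h
    rw [matPow] at h
    by_cases hxy : x = y
    · subst hxy; exact self_mem_ball 0 x
    · simp [hxy] at h
  | succ n ih =>
    intro x y h
    rw [matPow] at h
    have : ∃ z, ker a b x z * matPow (ker a b) n z y ≠ 0 := by
      by_contra hc
      push_neg at hc
      exact h ((tsum_congr hc).trans tsum_zero)
    obtain ⟨z, hz⟩ := this
    have h1 : ker a b x z ≠ 0 := fun h0 => hz (by simp [h0])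
    have h2 : matPow (ker a b) n z y ≠ 0 := fun h0 => hz (by simp [h0])
    have hb1 := mem_ball.1 (ker_mem_ball h1)
    have hbn := mem_ball.1 (ih z y h2)
    rw [mem_ball]
    intro j
    have := hb1 j; have := hbn j
    push_cast at *
    omega

lemma matPow_eq_zero {a b : Fin d → ℝ} {n : ℕ} {x y : Fin d → ℤ}
    (h : y ∉ ball n x) : matPow (ker a b) n x y = 0 := by
  by_contra hc; exact h (matPow_ne_zero_mem_ball n x y hc)

/-- one-step finite-sum formula -/
lemma matPow_succ (a b : Fin d → ℝ) (n : ℕ) (x y : Fin d → ℤ) :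
    matPow (ker a b) (n + 1) x y =
      ∑ z ∈ ball 1 x, ker a b x z * matPow (ker a b) n z y := by
  rw [matPow]
  exact tsum_eq_sum (fun z hz => by
    have : ker a b x z = 0 := by
      by_contra hc; exact hz (ker_mem_ball hc)
    simp [this])

lemma matPow_nonneg {a b : Fin d → ℝ} (ha : ∀ i, 0 ≤ a i) (hb : ∀ i, 0 ≤ b i) :
    ∀ (n : ℕ) (x y : Fin d → ℤ), 0 ≤ matPow (ker a b) n x y := by
  intro n
  induction n with
  | zero => intro x y; rw [matPow]; positivity
  | succ n ih =>
    intro x y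
    rw [matPow_succ]
    refine Finset.sum_nonneg fun z _ => mul_nonneg ?_ (ih z y)
    refine Finset.sum_nonneg fun i _ => add_nonneg ?_ ?_ <;>
      · split
        · first | exact ha i | exact hb i
        · exact le_rfl



lemma ball_zero (x : Fin d → ℤ) : ball 0 x = {x} := by
  ext y
  simp only [mem_ball, Finset.mem_singleton]
  constructor
  · intro h; funext j; have := h j; push_cast at this; omega
  · rintro rfl j; constructor <;> omega

lemma ball_subset {m : ℕ} {x z : Fin d → ℤ} (hz : z ∈ ball 1 x) :
    ball m z ⊆ ball (m + 1) x := by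
  intro w hw
  rw [mem_ball] at *
  intro j
  have := hz j; have := hw j
  push_cast at *
  omega

lemma ball_translate {n : ℕ} {x y : Fin d → ℤ} :
    y ∈ ball n x ↔ y - x ∈ ball n 0 := by
  rw [mem_ball, mem_ball]
  refine forall_congr' fun j => ?_
  simp only [Pi.sub_apply, Pi.zero_apply]
  omega

lemma ball_neg {n : ℕ} {y : Fin d → ℤ} : y ∈ ball n 0 ↔ -y ∈ ball n 0 := by
  rw [mem_ball, mem_ball]
  refine forall_congr' fun j => ?_
  simp only [Pi.neg_apply, Pi.zero_apply]
  omega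

lemma matPow_zero_same (a b : Fin d → ℝ) (x : Fin d → ℤ) :
    matPow (ker a b) 0 x x = 1 := by rw [matPow]; simp

/-- Chapman–Kolmogorov as a finite sum. -/
lemma matPow_add (a b : Fin d → ℝ) (n : ℕ) :
    ∀ (m : ℕ) (x y : Fin d → ℤ), matPow (ker a b) (m + n) x y =
      ∑ z ∈ ball m x, matPow (ker a b) m x z * matPow (ker a b) n z y := by
  intro m
  induction m with
  | zero =>
    intro x y
    rw [Nat.zero_add, ball_zero, Finset.sum_singleton, matPow_zero_same, one_mul]
  | succ m ih =>
    intro x y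
    have : m + 1 + n = (m + n) + 1 := by omega
    rw [this, matPow_succ]
    have step : ∀ z ∈ ball 1 x,
        ker a b x z * matPow (ker a b) (m + n) z y =
        ∑ w ∈ ball (m + 1) x, ker a b x z * (matPow (ker a b) m z w * matPow (ker a b) n w y) := by
      intro z hz
      rw [ih z y, Finset.mul_sum]
      refine Finset.sum_subset (ball_subset hz) fun w _ hw => ?_
      rw [matPow_eq_zero hw, zero_mul, mul_zero]
    rw [Finset.sum_congr rfl step, Finset.sum_comm]
    refine Finset.sum_congr rfl fun w _ => ?_
    rw [matPow_succ, Finset.sum_mul]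
    refine Finset.sum_congr rfl fun z _ => by ring

lemma add_single_mem_ball (x : Fin d → ℤ) (i : Fin d) : x + Pi.single i 1 ∈ ball 1 x := by
  rw [mem_ball]
  intro j
  by_cases hj : j = i <;> simp [hj, Pi.single_apply] <;> omega

lemma sub_single_mem_ball (x : Fin d → ℤ) (i : Fin d) : x - Pi.single i 1 ∈ ball 1 x := by
  rw [mem_ball]
  intro j
  by_cases hj : j = i <;> simp [hj, Pi.single_apply] <;> omega

lemma ker_row_sum (a b : Fin d → ℝ) (x : Fin d → ℤ) :
    ∑ y ∈ ball 1 x, ker a b x y = ∑ i, (a i + b i) := by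
  unfold ker
  rw [Finset.sum_comm]
  refine Finset.sum_congr rfl fun i _ => ?_
  rw [Finset.sum_add_distrib, Finset.sum_ite_eq' (ball 1 x) (x + Pi.single i 1) (fun _ => a i),
    Finset.sum_ite_eq' (ball 1 x) (x - Pi.single i 1) (fun _ => b i),
    if_pos (add_single_mem_ball x i), if_pos (sub_single_mem_ball x i)]

lemma matPow_row_sum {a b : Fin d → ℝ} (hs : ∑ i, (a i + b i) = 1) :
    ∀ (n : ℕ) (x : Fin d → ℤ), ∑ y ∈ ball n x, matPow (ker a b) n x y = 1 := by
  intro n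
  induction n with
  | zero => intro x; rw [ball_zero, Finset.sum_singleton, matPow_zero_same]
  | succ n ih =>
    intro x
    have h1 : ∀ y, matPow (ker a b) (n + 1) x y =
        ∑ z ∈ ball 1 x, ker a b x z * matPow (ker a b) n z y := fun y => matPow_succ a b n x y
    rw [Finset.sum_congr rfl fun y _ => h1 y, Finset.sum_comm]
    have h2 : ∀ z ∈ ball 1 x,
        ∑ y ∈ ball (n + 1) x, ker a b x z * matPow (ker a b) n z y = ker a b x z := by
      intro z hz
      rw [← Finset.mul_sum]
      have h3 : ∑ y ∈ ball (n + 1) x, matPow (ker a b) n z y = 1 := by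
        rw [← ih z]
        refine (Finset.sum_subset (ball_subset hz) fun w _ hw => matPow_eq_zero hw).symm
      rw [h3, mul_one]
    rw [Finset.sum_congr rfl h2, ker_row_sum, hs]

lemma ker_translate (a b : Fin d → ℝ) (x y : Fin d → ℤ) :
    ker a b x y = ker a b 0 (y - x) := by
  unfold ker
  refine Finset.sum_congr rfl fun i _ => ?_
  congr 1
  · refine if_congr ?_ rfl rfl
    rw [zero_add, sub_eq_iff_eq_add']
  · refine if_congr ?_ rfl rfl
    rw [zero_sub, sub_eq_iff_eq_add', ← sub_eq_add_neg]

lemma matPow_translate (a b : Fin d → ℝ) :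
    ∀ (n : ℕ) (x y : Fin d → ℤ), matPow (ker a b) n x y = matPow (ker a b) n 0 (y - x) := by
  intro n
  induction n with
  | zero =>
    intro x y
    rw [matPow, matPow]
    refine if_congr ?_ rfl rfl
    exact ⟨fun h => by rw [h, sub_self], fun h => (sub_eq_zero.mp h.symm).symm⟩
  | succ n ih =>
    intro x y
    rw [matPow_succ, matPow_succ]
    refine Finset.sum_nbij' (fun z => z - x) (fun w => w + x) ?_ ?_ ?_ ?_ ?_
    · intro z hz; rw [← ball_translate]; simpa using hz
    · intro w hw; rw [ball_translate]; simpa using hw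
    · intro z _; funext j; simp; try omega
    · intro w _; funext j; simp; try omega
    · intro z _
      rw [ker_translate a b x z, ih z y, ih (z - x) (y - x)]
      have h4 : y - x - (z - x) = y - z := by abel
      rw [h4]

lemma ker_neg (r : Fin d → ℝ) (z : Fin d → ℤ) : ker r r 0 z = ker r r 0 (-z) := by
  unfold ker
  refine Finset.sum_congr rfl fun i _ => ?_
  rw [add_comm]
  congr 1
  · refine if_congr ?_ rfl rfl
    rw [zero_add, zero_sub]
    exact neg_eq_iff_eq_neg.symm
  · refine if_congr ?_ rfl rfl
    rw [zero_add, zero_sub]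
    exact neg_inj.symm

lemma matPow_symm_neg (r : Fin d → ℝ) :
    ∀ (n : ℕ) (y : Fin d → ℤ), matPow (ker r r) n 0 y = matPow (ker r r) n 0 (-y) := by
  intro n
  induction n with
  | zero =>
    intro y
    rw [matPow, matPow]
    refine if_congr ?_ rfl rfl
    exact ⟨fun h => by rw [← h, neg_zero], fun h => by rw [← neg_zero, h, neg_neg]⟩
  | succ n ih =>
    intro y
    rw [matPow_succ, matPow_succ]
    refine Finset.sum_nbij' (fun z => -z) (fun z => -z) ?_ ?_ ?_ ?_ ?_
    · intro z hz; exact ball_neg.mp hz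
    · intro z hz; exact ball_neg.mp hz
    · intro z _; simp
    · intro z _; simp
    · intro z hz
      rw [← ker_neg r z, matPow_translate r r n z y, matPow_translate r r n (-z) (-y),
        ih (y - z)]
      have h4 : -(y - z) = -y - -z := by abel
      rw [h4]


lemma matPow_up_zero {a b : Fin d → ℝ} {i : Fin d} (hai : a i = 0) :
    ∀ (n : ℕ) (x y : Fin d → ℤ), x i < y i → matPow (ker a b) n x y = 0 := by
  intro n
  induction n with
  | zero =>
    intro x y hxy
    rw [matPow, if_neg]
    intro h; subst h; omega
  | succ n ih =>
    intro x y hxy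
    rw [matPow_succ]
    refine Finset.sum_eq_zero fun z _ => ?_
    by_cases hk : ker a b x z = 0
    · rw [hk, zero_mul]
    obtain ⟨j, hj | hj⟩ := ker_ne_zero hk
    · obtain ⟨rfl, haj⟩ := hj
      have hji : j ≠ i := fun h => haj (h ▸ hai)
      have hz : (x + Pi.single j 1 : Fin d → ℤ) i = x i := by
        simp [Pi.single_apply, hji.symm]
      rw [ih _ y (by omega), mul_zero]
    · obtain ⟨rfl, -⟩ := hj
      have hz : (x - Pi.single j 1 : Fin d → ℤ) i ≤ x i := by
        by_cases hij : j = i <;> simp [Pi.single_apply, hij] <;> omega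
      rw [ih _ y (by omega), mul_zero]

lemma matPow_down_zero {a b : Fin d → ℝ} {i : Fin d} (hbi : b i = 0) :
    ∀ (n : ℕ) (x y : Fin d → ℤ), y i < x i → matPow (ker a b) n x y = 0 := by
  intro n
  induction n with
  | zero =>
    intro x y hxy
    rw [matPow, if_neg]
    intro h; subst h; omega
  | succ n ih =>
    intro x y hxy
    rw [matPow_succ]
    refine Finset.sum_eq_zero fun z _ => ?_
    by_cases hk : ker a b x z = 0
    · rw [hk, zero_mul]
    obtain ⟨j, hj | hj⟩ := ker_ne_zero hk
    · obtain ⟨rfl, -⟩ := hj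
      have hz : x i ≤ (x + Pi.single j 1 : Fin d → ℤ) i := by
        by_cases hij : j = i <;> simp [Pi.single_apply, hij] <;> omega
      rw [ih _ y (by omega), mul_zero]
    · obtain ⟨rfl, hbj⟩ := hj
      have hji : j ≠ i := fun h => hbj (h ▸ hbi)
      have hz : (x - Pi.single j 1 : Fin d → ℤ) i = x i := by
        simp [Pi.single_apply, hji.symm]
      rw [ih _ y (by omega), mul_zero]

/-- the exponential function `x ↦ ∏ i, c i ^ x i`. -/
noncomputable def gfun (c : Fin d → ℝ) (x : Fin d → ℤ) : ℝ := ∏ i, c i ^ (x i)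

lemma gfun_pos {c : Fin d → ℝ} (hc : ∀ i, 0 < c i) (x : Fin d → ℤ) : 0 < gfun c x :=
  Finset.prod_pos fun i _ => zpow_pos (hc i) _

lemma gfun_zero (c : Fin d → ℝ) : gfun c 0 = 1 := by simp [gfun]

lemma prod_single_zpow {c : Fin d → ℝ} (i : Fin d) :
    ∏ j, c j ^ ((Pi.single i 1 : Fin d → ℤ) j) = c i := by
  rw [Finset.prod_eq_single i (fun j _ hj => by simp [Pi.single_apply, hj]) (by simp)]
  simp

lemma gfun_add_single {c : Fin d → ℝ} (hc : ∀ i, 0 < c i) (x : Fin d → ℤ) (i : Fin d) :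
    gfun c (x + Pi.single i 1) = gfun c x * c i := by
  unfold gfun
  rw [← prod_single_zpow (c := c) i, ← Finset.prod_mul_distrib]
  refine Finset.prod_congr rfl fun j _ => ?_
  rw [Pi.add_apply, zpow_add₀ (hc j).ne']

lemma gfun_sub_single {c : Fin d → ℝ} (hc : ∀ i, 0 < c i) (x : Fin d → ℤ) (i : Fin d) :
    gfun c (x - Pi.single i 1) = gfun c x / c i := by
  unfold gfun
  rw [← prod_single_zpow (c := c) i, ← Finset.prod_div_distrib]
  refine Finset.prod_congr rfl fun j _ => ?_
  rw [Pi.sub_apply, zpow_sub₀ (hc j).ne']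

lemma ker_conj {a b r c : Fin d → ℝ} {ρ : ℝ} (hc : ∀ i, 0 < c i)
    (hrel1 : ∀ i, a i = ρ * c i * r i) (hrel2 : ∀ i, b i * c i = ρ * r i)
    (x y : Fin d → ℤ) :
    ker a b x y * gfun c x = ρ * gfun c y * ker r r x y := by
  unfold ker
  rw [Finset.sum_mul, Finset.mul_sum]
  refine Finset.sum_congr rfl fun i _ => ?_
  by_cases h1 : y = x + Pi.single i 1
  · subst h1
    rw [if_neg (add_single_ne_sub_single x i), if_neg (add_single_ne_sub_single x i),
      if_pos rfl, if_pos rfl, gfun_add_single hc]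
    rw [hrel1 i]; ring
  by_cases h2 : y = x - Pi.single i 1
  · subst h2
    rw [if_neg h1, if_neg h1, if_pos rfl, if_pos rfl, gfun_sub_single hc]
    have hci : c i ≠ 0 := (hc i).ne'
    have h3 : b i = ρ * r i / c i := by
      rw [eq_div_iff hci]
      exact hrel2 i
    rw [h3]
    field_simp
    try ring
  · rw [if_neg h1, if_neg h1, if_neg h2, if_neg h2]
    ring

lemma matPow_conj {a b r c : Fin d → ℝ} {ρ : ℝ} (hc : ∀ i, 0 < c i)
    (hrel1 : ∀ i, a i = ρ * c i * r i) (hrel2 : ∀ i, b i * c i = ρ * r i) :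
    ∀ (n : ℕ) (x y : Fin d → ℤ),
      matPow (ker a b) n x y * gfun c x = ρ ^ n * gfun c y * matPow (ker r r) n x y := by
  intro n
  induction n with
  | zero =>
    intro x y
    rw [matPow, matPow, pow_zero]
    by_cases h : x = y
    · subst h; ring
    · rw [if_neg h]; ring
  | succ n ih =>
    intro x y
    rw [matPow_succ, matPow_succ, Finset.sum_mul, Finset.mul_sum]
    refine Finset.sum_congr rfl fun z _ => ?_
    have e1 := ker_conj hc hrel1 hrel2 x z
    have e2 := ih z y
    have : ρ ^ (n + 1) = ρ * ρ ^ n := by ring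
    rw [this]
    linear_combination matPow (ker a b) n z y * e1 + ρ * ker r r x z * e2

/-- lower bound on return probabilities of the symmetric kernel -/
lemma card_ball (n : ℕ) : (ball n (0 : Fin d → ℤ)).card = (2 * n + 1) ^ d := by
  unfold ball
  rw [Pi.card_Icc]
  have : ∀ j : Fin d, (Finset.Icc ((0:Fin d → ℤ) j - n) ((0:Fin d → ℤ) j + n)).card
      = 2 * n + 1 := by
    intro j
    rw [Int.card_Icc]
    show ((0:ℤ) + n + 1 - ((0:ℤ) - n)).toNat = 2 * n + 1
    omega
  rw [Finset.prod_congr rfl fun j _ => this j]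
  simp

lemma return_lower {r : Fin d → ℝ} (hr : ∀ i, 0 ≤ r i) (hs : ∑ i, (r i + r i) = 1)
    (n : ℕ) :
    (((2 * n + 1 : ℕ) : ℝ) ^ d)⁻¹ ≤ matPow (ker r r) (2 * n) 0 0 := by
  have hsymm : ∀ z ∈ ball n (0 : Fin d → ℤ),
      matPow (ker r r) n 0 z * matPow (ker r r) n z 0 = (matPow (ker r r) n 0 z) ^ 2 := by
    intro z _
    rw [matPow_translate r r n z 0, zero_sub, ← matPow_symm_neg]
    ring
  have hM : matPow (ker r r) (2 * n) 0 0
      = ∑ z ∈ ball n (0 : Fin d → ℤ), matPow (ker r r) n 0 z ^ 2 := by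
    have h2n : 2 * n = n + n := by omega
    rw [h2n, matPow_add]
    exact Finset.sum_congr rfl hsymm
  rw [hM]
  have hcs := sq_sum_le_card_mul_sum_sq (s := ball n (0 : Fin d → ℤ))
    (f := fun z => matPow (ker r r) n 0 z)
  rw [matPow_row_sum hs n 0, one_pow, card_ball] at hcs
  have hpos : (0:ℝ) < ((2 * n + 1 : ℕ) : ℝ) ^ d := by positivity
  rw [inv_le_iff_one_le_mul₀ hpos]
  calc (1:ℝ) ≤ _ := by exact_mod_cast hcs
  _ = _ := by push_cast; ring

lemma return_upper {r : Fin d → ℝ} (hr : ∀ i, 0 ≤ r i) (hs : ∑ i, (r i + r i) = 1)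
    (n : ℕ) : matPow (ker r r) n 0 0 ≤ 1 := by
  rw [← matPow_row_sum hs n 0]
  exact Finset.single_le_sum (f := fun y => matPow (ker r r) n 0 y)
    (fun y _ => matPow_nonneg hr hr n 0 y) (self_mem_ball n 0)


lemma tendsto_nat_rpow_inv :
    Tendsto (fun k : ℕ => (k:ℝ) ^ (k:ℝ)⁻¹) atTop (nhds 1) := by
  convert_to Tendsto ((fun k : ℝ => k ^ k⁻¹) ∘ Nat.cast) atTop (nhds 1)
  · rfl
  apply Tendsto.comp _ tendsto_natCast_atTop_atTop
  simp_rw [← one_div]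
  exact tendsto_rpow_div

/-- The main lower-bound tendsto: `(2n+1) ^ (-d/(2n)) → 1`. -/
lemma tendsto_t (d : ℕ) :
    Tendsto (fun n : ℕ => ((2*n+1 : ℕ):ℝ) ^ (-(d:ℝ) * (((2*n : ℕ)):ℝ)⁻¹)) atTop (nhds 1) := by
  have hA : Tendsto (fun n : ℕ => ((2*n+1 : ℕ):ℝ) ^ (((2*n+1 : ℕ)):ℝ)⁻¹) atTop (nhds 1) :=
    tendsto_nat_rpow_inv.comp
      (tendsto_atTop_mono (fun n => by show n ≤ 2*n+1; omega) tendsto_id)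
  have hratio : Tendsto (fun n : ℕ => ((2*n+1 : ℕ):ℝ) * (((2*n : ℕ)):ℝ)⁻¹) atTop (nhds 1) := by
    have h0 : Tendsto (fun n : ℕ => 1 + (((2*n : ℕ)):ℝ)⁻¹) atTop (nhds 1) := by
      have := tendsto_inv_atTop_zero.comp
        ((tendsto_natCast_atTop_atTop (R := ℝ)).comp
          (tendsto_atTop_mono (fun n : ℕ => by show n ≤ 2*n; omega) tendsto_id))
      simpa using (tendsto_const_nhds (x := (1:ℝ)) (f := atTop)).add this
    refine Tendsto.congr' ?_ h0
    filter_upwards [eventually_ge_atTop 1] with n hn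
    have h2 : ((2*n : ℕ):ℝ) ≠ 0 := Nat.cast_ne_zero.mpr (by omega)
    push_cast at h2 ⊢
    field_simp
    try ring
  have hγ : Tendsto (fun n : ℕ => -(d:ℝ) * (((2*n+1 : ℕ):ℝ) * (((2*n : ℕ)):ℝ)⁻¹))
      atTop (nhds (-(d:ℝ))) := by
    simpa using hratio.const_mul (-(d:ℝ))
  have hcomb := hA.rpow hγ (Or.inl one_ne_zero)
  rw [Real.one_rpow] at hcomb
  refine Tendsto.congr' ?_ hcomb
  filter_upwards [eventually_ge_atTop 1] with n hn
  rw [← Real.rpow_mul (by positivity)]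
  congr 1
  have h1 : ((2*n+1 : ℕ):ℝ) ≠ 0 := Nat.cast_ne_zero.mpr (by omega)
  field_simp

end SRW

/-- The anisotropic nearest-neighbour random walk on `ℤ^d` with
`p(x, x+e_i) = p⁺ i`, `p(x, x-e_i) = p⁻ i`, `∑ i (p⁺ i + p⁻ i) = 1`, irreducible,
has spectral radius `2 ∑ i √(p⁺ i · p⁻ i)`. -/
theorem specRad_walk_Zd (d : ℕ) (hd : 0 < d) (pp pm : Fin d → ℝ)
    (hpp : ∀ i, 0 ≤ pp i) (hpm : ∀ i, 0 ≤ pm i)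
    (hsum : ∑ i, (pp i + pm i) = 1)
    (hirr : IsIrreducibleKernel (fun x y : Fin d → ℤ =>
      ∑ i, ((if y = x + Pi.single i 1 then pp i else 0) +
            (if y = x - Pi.single i 1 then pm i else 0)))) :
    specRad (fun x y : Fin d → ℤ =>
      ∑ i, ((if y = x + Pi.single i 1 then pp i else 0) +
            (if y = x - Pi.single i 1 then pm i else 0))) 0 =
      2 * ∑ i, Real.sqrt (pp i * pm i) := by
  classical
  have hirr' : IsIrreducibleKernel (SRW.ker pp pm) := hirr
  have hppos : ∀ i, 0 < pp i := by
    intro i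
    rcases (hpp i).lt_or_eq with h | h
    · exact h
    obtain ⟨n, hn⟩ := hirr' 0 (Pi.single i 1)
    rw [SRW.matPow_up_zero h.symm n 0 (Pi.single i 1) (by simp)] at hn
    exact (lt_irrefl 0 hn).elim
  have hpmos : ∀ i, 0 < pm i := by
    intro i
    rcases (hpm i).lt_or_eq with h | h
    · exact h
    obtain ⟨n, hn⟩ := hirr' (Pi.single i 1) 0
    rw [SRW.matPow_down_zero h.symm n (Pi.single i 1) 0 (by simp)] at hn
    exact (lt_irrefl 0 hn).elim
  have hdne : Nonempty (Fin d) := ⟨⟨0, hd⟩⟩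
  set ρ : ℝ := 2 * ∑ i, Real.sqrt (pp i * pm i) with hρdef
  have hρ : 0 < ρ := by
    rw [hρdef]
    have h1 : 0 < ∑ i, Real.sqrt (pp i * pm i) :=
      Finset.sum_pos (fun i _ => Real.sqrt_pos.mpr (mul_pos (hppos i) (hpmos i)))
        Finset.univ_nonempty
    linarith
  set r : Fin d → ℝ := fun i => Real.sqrt (pp i * pm i) / ρ with hrdef
  set c : Fin d → ℝ := fun i => Real.sqrt (pp i) / Real.sqrt (pm i) with hcdef
  have hc : ∀ i, 0 < c i := fun i =>
    div_pos (Real.sqrt_pos.mpr (hppos i)) (Real.sqrt_pos.mpr (hpmos i))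
  have hr : ∀ i, 0 ≤ r i := fun i => div_nonneg (Real.sqrt_nonneg _) hρ.le
  have hsqrt : ∀ i, Real.sqrt (pp i * pm i) = Real.sqrt (pp i) * Real.sqrt (pm i) :=
    fun i => Real.sqrt_mul (hpp i) _
  have hrel1 : ∀ i, pp i = ρ * c i * r i := by
    intro i
    have h1 : Real.sqrt (pp i) ≠ 0 := (Real.sqrt_pos.mpr (hppos i)).ne'
    have h2 : Real.sqrt (pm i) ≠ 0 := (Real.sqrt_pos.mpr (hpmos i)).ne'
    have h3 : Real.sqrt (pp i) * Real.sqrt (pp i) = pp i := Real.mul_self_sqrt (hpp i)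
    rw [hrdef, hcdef]
    simp only
    rw [hsqrt i]
    field_simp
    linear_combination (-1 : ℝ) * h3
  have hrel2 : ∀ i, pm i * c i = ρ * r i := by
    intro i
    have h2 : Real.sqrt (pm i) ≠ 0 := (Real.sqrt_pos.mpr (hpmos i)).ne'
    have h4 : Real.sqrt (pm i) * Real.sqrt (pm i) = pm i := Real.mul_self_sqrt (hpm i)
    rw [hrdef, hcdef]
    simp only
    rw [hsqrt i]
    field_simp
    linear_combination (-Real.sqrt (pp i)) * h4
  have hrsum : ∑ i, (r i + r i) = 1 := by
    have h1 : ∑ i, (r i + r i) = (2 * ∑ i, Real.sqrt (pp i * pm i)) / ρ := by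
      rw [Finset.mul_sum, Finset.sum_div]
      refine Finset.sum_congr rfl fun i _ => ?_
      rw [hrdef]
      ring
    rw [h1, ← hρdef, div_self hρ.ne']
  have hconj := SRW.matPow_conj hc hrel1 hrel2
  have key : ∀ n, matPow (SRW.ker pp pm) n 0 0 = ρ ^ n * matPow (SRW.ker r r) n 0 0 := by
    intro n
    have h := hconj n 0 0
    rwa [SRW.gfun_zero, mul_one, mul_one] at h
  have hq0 : ∀ n, 0 ≤ matPow (SRW.ker r r) n 0 0 := fun n => SRW.matPow_nonneg hr hr n 0 0
  have hq1 : ∀ n, matPow (SRW.ker r r) n 0 0 ≤ 1 := fun n => SRW.return_upper hr hrsum n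
  have hql : ∀ n, (((2*n+1 : ℕ):ℝ) ^ d)⁻¹ ≤ matPow (SRW.ker r r) (2*n) 0 0 :=
    fun n => SRW.return_lower hr hrsum n
  set u : ℕ → ℝ := fun n => matPow (SRW.ker pp pm) n 0 0 ^ ((n:ℝ)⁻¹) with hudef
  show limsup u atTop = ρ
  have hu0 : ∀ n, 0 ≤ u n := fun n => Real.rpow_nonneg (SRW.matPow_nonneg hpp hpm n 0 0) _
  have hu_eq : ∀ n, 1 ≤ n → u n = ρ * matPow (SRW.ker r r) n 0 0 ^ ((n:ℝ)⁻¹) := by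
    intro n hn
    have hn' : ((n:ℝ)) ≠ 0 := Nat.cast_ne_zero.mpr (by omega)
    rw [hudef]
    simp only
    rw [key n, Real.mul_rpow (by positivity) (hq0 n), ← Real.rpow_natCast ρ n,
      ← Real.rpow_mul hρ.le, mul_inv_cancel₀ hn', Real.rpow_one]
  have hub : ∀ n, 1 ≤ n → u n ≤ ρ := by
    intro n hn
    rw [hu_eq n hn]
    have h1 : matPow (SRW.ker r r) n 0 0 ^ ((n:ℝ)⁻¹) ≤ 1 :=
      Real.rpow_le_one (hq0 n) (hq1 n) (by positivity)
    exact mul_le_of_le_one_right hρ.le h1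
  have hbdd : Filter.IsBoundedUnder (· ≤ ·) atTop u := by
    refine Filter.isBoundedUnder_of ⟨max ρ 1, fun n => ?_⟩
    rcases Nat.eq_zero_or_pos n with rfl | hn
    · rw [hudef]
      simp only
      rw [Nat.cast_zero, inv_zero, Real.rpow_zero]
      exact le_max_right _ _
    · exact le_trans (hub n hn) (le_max_left _ _)
  have hcob : Filter.IsCoboundedUnder (· ≤ ·) atTop u :=
    Filter.IsBoundedUnder.isCoboundedUnder_le
      (Filter.isBoundedUnder_of ⟨0, fun n => hu0 n⟩)
  have h_le : limsup u atTop ≤ ρ :=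
    Filter.limsup_le_of_le hcob (Filter.eventually_atTop.mpr ⟨1, hub⟩)
  have htend : Tendsto (fun n => u (2*n)) atTop (nhds ρ) := by
    have htl : Tendsto
        (fun n : ℕ => ρ * (((2*n+1 : ℕ):ℝ) ^ (-(d:ℝ) * (((2*n : ℕ)):ℝ)⁻¹)))
        atTop (nhds ρ) := by
      simpa using (SRW.tendsto_t d).const_mul ρ
    refine tendsto_of_tendsto_of_tendsto_of_le_of_le' htl tendsto_const_nhds ?_ ?_
    · filter_upwards [eventually_ge_atTop 1] with n hn
      have h2n : 1 ≤ 2*n := by omega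
      rw [hu_eq (2*n) h2n]
      have hx : (0:ℝ) ≤ ((2*n+1 : ℕ):ℝ) := by positivity
      have hB : ((2*n+1 : ℕ):ℝ) ^ (-(d:ℝ) * (((2*n : ℕ)):ℝ)⁻¹)
          ≤ matPow (SRW.ker r r) (2*n) 0 0 ^ (((2*n : ℕ):ℝ)⁻¹) := by
        have e1 : ((2*n+1 : ℕ):ℝ) ^ (-(d:ℝ) * (((2*n : ℕ)):ℝ)⁻¹)
            = ((((2*n+1 : ℕ):ℝ) ^ d)⁻¹) ^ (((2*n : ℕ):ℝ)⁻¹) := by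
          rw [Real.rpow_mul hx, Real.rpow_neg hx, Real.rpow_natCast]
        rw [e1]
        exact Real.rpow_le_rpow (by positivity) (hql n) (by positivity)
      exact mul_le_mul_of_nonneg_left hB hρ.le
    · filter_upwards [eventually_ge_atTop 1] with n hn
      exact hub (2*n) (by omega)
  have h_ge : ρ ≤ limsup u atTop := by
    refine le_of_forall_pos_le_add ?_
    intro ε hε
    have hfreq : ∃ᶠ n in atTop, ρ - ε ≤ u n := by
      rw [Filter.frequently_atTop]
      intro N
      obtain ⟨M, hM⟩ := Filter.eventually_atTop.mp
        (htend.eventually (eventually_ge_nhds (by linarith : ρ - ε < ρ)))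
      refine ⟨2 * max M N, ?_, hM (max M N) (le_max_left _ _)⟩
      calc N ≤ max M N := le_max_right _ _
        _ ≤ 2 * max M N := by omega
    have h2 := Filter.le_limsup_of_frequently_le hfreq hbdd
    linarith
  linarith [h_le, h_ge]
end

section
/- Let ρ ∈ (0,1] and m > 1/ρ. For a BMC with constant mean offspring m on an irreducible chain (X,P) with ρ(P) = ρ, started at x0, the number of particles located at x0 at times nk (for suitable k with p^{(k)}(x0,x0) m^k > 1), counting only descendants through x0-visits at the observation times, stochastically dominates a supercritical Galton–Watson process; hence α(x0) > 0. -/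
open Filter
open scoped ENNReal

/-! ### Branching Markov Chains

A BMC on an irreducible chain `(X, K)`: each particle at `x` produces `k ≥ 1` offspring
with probability `(off x) k` and the offspring move independently according to the
kernel `K`. Configurations of particles are recorded as lists of positions. -/

/-- The law of `n` i.i.d. moves from `x` according to the kernel `K`. -/
noncomputable def iidMoves {X : Type} (K : X → PMF X) (x : X) : ℕ → PMF (List X)
  | 0 => PMF.pure []
  | n + 1 => (K x).bind fun y => (iidMoves K x n).bind fun l => PMF.pure (y :: l)

/-- One particle at `x` branches (according to `off x`) and its children each move
one step (according to `K`). -/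
noncomputable def branchStep {X : Type} (K : X → PMF X) (off : X → PMF ℕ) (x : X) :
    PMF (List X) :=
  (off x).bind fun k => iidMoves K x k

/-- One step of the BMC: every particle of the configuration branches and moves
independently. -/
noncomputable def configStep {X : Type} (K : X → PMF X) (off : X → PMF ℕ) :
    List X → PMF (List X)
  | [] => PMF.pure []
  | x :: c => (branchStep K off x).bind fun l₁ =>
      (configStep K off c).bind fun l₂ => PMF.pure (l₁ ++ l₂)

/-- The law of the trajectory of configurations up to time `n` (a list of `n+1`
configurations), starting from the configuration `c`. -/
noncomputable def bmcPaths {X : Type} (K : X → PMF X) (off : X → PMF ℕ) :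
    ℕ → List X → PMF (List (List X))
  | 0, c => PMF.pure [c]
  | n + 1, c => (configStep K off c).bind fun c' =>
      (bmcPaths K off n c').bind fun tr => PMF.pure (c :: tr)

/-- `alpha K off x` is the probability that, starting the BMC with a single particle
at `x`, the state `x` is visited by particles of the cloud at infinitely many times:
`P(x visited at some time ≥ N)` decreases to it as `N → ∞`, and each of these is the
increasing limit over finite horizons `M`. -/
noncomputable def alphaBMC {X : Type} [DecidableEq X] (K : X → PMF X) (off : X → PMF ℕ)
    (x : X) : ℝ≥0∞ :=
  ⨅ N : ℕ, ⨆ M : ℕ,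
    (bmcPaths K off M [x]).toOuterMeasure {tr | ∃ n, N ≤ n ∧ x ∈ tr.getD n []}

/-- The one-step transition probabilities of the PMF kernel `K`, as a real kernel. -/
noncomputable def kerReal {X : Type} (K : X → PMF X) : X → X → ℝ :=
  fun x y => (K x y).toReal

namespace BMCwork

noncomputable def Epmf {α : Type*} (p : PMF α) (w : α → ℝ≥0∞) : ℝ≥0∞ := ∑' a, p a * w a

theorem Epmf_pure {α : Type*} (a : α) (w : α → ℝ≥0∞) : Epmf (PMF.pure a) w = w a := by
  rw [Epmf]
  rw [tsum_eq_single a]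
  · simp [PMF.pure_apply]
  · intro b hb; simp [PMF.pure_apply, hb]

theorem Epmf_bind {α β : Type*} (p : PMF α) (f : α → PMF β) (w : β → ℝ≥0∞) :
    Epmf (p.bind f) w = Epmf p (fun a => Epmf (f a) w) := by
  simp only [Epmf, PMF.bind_apply]
  simp only [ENNReal.tsum_mul_right.symm]
  rw [ENNReal.tsum_comm]
  congr 1; ext a
  rw [← ENNReal.tsum_mul_left]
  congr 1; ext b; ring

theorem Epmf_congr {α : Type*} (p : PMF α) {w w' : α → ℝ≥0∞} (h : ∀ a, w a = w' a) :
    Epmf p w = Epmf p w' := by simp only [Epmf]; exact tsum_congr fun a => by rw [h]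

theorem Epmf_mono {α : Type*} (p : PMF α) {w w' : α → ℝ≥0∞} (h : ∀ a, w a ≤ w' a) :
    Epmf p w ≤ Epmf p w' :=
  ENNReal.tsum_le_tsum fun a => mul_le_mul_right (h a) _

theorem Epmf_const {α : Type*} (p : PMF α) (c : ℝ≥0∞) : Epmf p (fun _ => c) = c := by
  rw [Epmf, ENNReal.tsum_mul_right, p.tsum_coe, one_mul]

theorem Epmf_mul_const {α : Type*} (p : PMF α) (w : α → ℝ≥0∞) (c : ℝ≥0∞) :
    Epmf p (fun a => w a * c) = Epmf p w * c := by
  simp only [Epmf, ← ENNReal.tsum_mul_right]; congr 1; ext a; ring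

theorem Epmf_const_mul {α : Type*} (p : PMF α) (w : α → ℝ≥0∞) (c : ℝ≥0∞) :
    Epmf p (fun a => c * w a) = c * Epmf p w := by
  simp only [Epmf, ← ENNReal.tsum_mul_left]; congr 1; ext a; ring

theorem Epmf_add {α : Type*} (p : PMF α) (w w' : α → ℝ≥0∞) :
    Epmf p (fun a => w a + w' a) = Epmf p w + Epmf p w' := by
  simp only [Epmf, mul_add]; exact ENNReal.tsum_add

theorem Epmf_le_one {α : Type*} (p : PMF α) {w : α → ℝ≥0∞} (h : ∀ a, w a ≤ 1) :
    Epmf p w ≤ 1 := by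
  calc Epmf p w ≤ Epmf p (fun _ => 1) := Epmf_mono p h
  _ = 1 := Epmf_const p 1

/-- Expectation over a "two independent samples, concatenated" experiment. -/
theorem Epmf_bind2pure {α β γ : Type*} (p : PMF α) (q : PMF β) (u : α → β → γ)
    (w : γ → ℝ≥0∞) :
    Epmf (p.bind fun a => q.bind fun b => PMF.pure (u a b)) w
      = Epmf p (fun a => Epmf q (fun b => w (u a b))) := by
  rw [Epmf_bind]
  exact Epmf_congr _ fun a => by
    rw [Epmf_bind]
    exact Epmf_congr _ fun b => Epmf_pure _ _

variable {X : Type} (K : X → PMF X) (off : X → PMF ℕ)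

noncomputable def evolve : ℕ → List X → PMF (List X)
  | 0, c => PMF.pure c
  | n + 1, c => (configStep K off c).bind (evolve n)

theorem configStep_singleton (x : X) : configStep K off [x] = branchStep K off x := by
  show ((branchStep K off x).bind fun l₁ => (PMF.pure []).bind fun l₂ => PMF.pure (l₁ ++ l₂))
      = branchStep K off x
  simp [PMF.pure_bind, PMF.bind_pure]

theorem evolve_nil (n : ℕ) : evolve K off n [] = PMF.pure [] := by
  induction n with
  | zero => rfl
  | succ n ih =>
      show ((PMF.pure []).bind (evolve K off n)) = _
      rw [PMF.pure_bind, ih]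

theorem configStep_append (c₁ c₂ : List X) :
    configStep K off (c₁ ++ c₂) = (configStep K off c₁).bind fun l₁ =>
      (configStep K off c₂).bind fun l₂ => PMF.pure (l₁ ++ l₂) := by
  induction c₁ with
  | nil =>
      show configStep K off c₂ = (PMF.pure []).bind fun l₁ =>
        (configStep K off c₂).bind fun l₂ => PMF.pure (l₁ ++ l₂)
      simp [PMF.pure_bind, PMF.bind_pure]
  | cons x c₁ ih =>
      show configStep K off (x :: (c₁ ++ c₂)) = _
      rw [show configStep K off (x :: (c₁ ++ c₂)) = (branchStep K off x).bind fun l₁ =>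
        (configStep K off (c₁ ++ c₂)).bind fun l => PMF.pure (l₁ ++ l) from rfl, ih]
      show _ = ((branchStep K off x).bind fun l₁ =>
        (configStep K off c₁).bind fun l => PMF.pure (l₁ ++ l)).bind fun a =>
          (configStep K off c₂).bind fun b => PMF.pure (a ++ b)
      simp only [PMF.bind_bind, PMF.pure_bind, List.append_assoc]

theorem evolve_add (a b : ℕ) (c : List X) :
    evolve K off (a + b) c = (evolve K off a c).bind (evolve K off b) := by
  induction a generalizing c with
  | zero => simp [evolve, PMF.pure_bind]
  | succ a ih =>
      rw [Nat.add_right_comm]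
      rw [show evolve K off (a + b + 1) c
          = (configStep K off c).bind (evolve K off (a + b)) from rfl]
      show _ = ((configStep K off c).bind (evolve K off a)).bind (evolve K off b)
      rw [PMF.bind_bind]
      exact congrArg _ (funext fun c' => ih c')

theorem evolve_append (n : ℕ) (c₁ c₂ : List X) :
    evolve K off n (c₁ ++ c₂) = (evolve K off n c₁).bind fun d₁ =>
      (evolve K off n c₂).bind fun d₂ => PMF.pure (d₁ ++ d₂) := by
  induction n generalizing c₁ c₂ with
  | zero => simp [evolve, PMF.pure_bind]
  | succ n ih =>
      show (configStep K off (c₁ ++ c₂)).bind (evolve K off n) = _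
      rw [configStep_append]
      show _ = ((configStep K off c₁).bind (evolve K off n)).bind fun d₁ =>
        ((configStep K off c₂).bind (evolve K off n)).bind fun d₂ => PMF.pure (d₁ ++ d₂)
      simp only [PMF.bind_bind, PMF.pure_bind]
      refine congrArg _ (funext fun l₁ => ?_)
      rw [show (fun a => evolve K off n (l₁ ++ a)) = fun a =>
        (evolve K off n l₁).bind fun d₁ => (evolve K off n a).bind fun d₂ =>
          PMF.pure (d₁ ++ d₂) from funext fun a => ih l₁ a]
      rw [PMF.bind_comm (configStep K off c₂) (evolve K off n l₁)]

/-- `n`-step kernel in `ℝ≥0∞`. -/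
noncomputable def kpow [DecidableEq X] : ℕ → X → X → ℝ≥0∞
  | 0, x, y => if x = y then 1 else 0
  | n + 1, x, y => ∑' z, K x z * kpow n z y

theorem kpow_le_one [DecidableEq X] (n : ℕ) (x y : X) : kpow K n x y ≤ 1 := by
  induction n generalizing x with
  | zero => show (if x = y then (1:ℝ≥0∞) else 0) ≤ 1; split <;> simp
  | succ n ih =>
      show (∑' z, K x z * kpow K n z y) ≤ 1
      calc (∑' z, K x z * kpow K n z y) ≤ ∑' z, K x z * 1 :=
            ENNReal.tsum_le_tsum fun z => mul_le_mul_right (ih z) _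
      _ = 1 := by simp [PMF.tsum_coe]

section count

variable [DecidableEq X] (x0 : X)

/-- Expected number of particles at `x0` at time `n` starting from configuration `c`. -/
noncomputable def Ecnt (n : ℕ) (c : List X) : ℝ≥0∞ :=
  Epmf (evolve K off n c) (fun d => (d.count x0 : ℝ≥0∞))

theorem Ecnt_append (n : ℕ) (c₁ c₂ : List X) :
    Ecnt K off x0 n (c₁ ++ c₂) = Ecnt K off x0 n c₁ + Ecnt K off x0 n c₂ := by
  rw [Ecnt, evolve_append, Epmf_bind2pure]
  calc Epmf (evolve K off n c₁)
        (fun d₁ => Epmf (evolve K off n c₂) fun d₂ => ((d₁ ++ d₂).count x0 : ℝ≥0∞))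
      = Epmf (evolve K off n c₁) (fun d₁ => (d₁.count x0 : ℝ≥0∞) + Ecnt K off x0 n c₂) := by
        refine Epmf_congr _ fun d₁ => ?_
        rw [Epmf_congr _ (fun d₂ => by rw [List.count_append, Nat.cast_add]),
          Epmf_add, Epmf_const, Ecnt]
    _ = _ := by rw [Epmf_add, Epmf_const]; rfl

theorem Ecnt_list (n : ℕ) (c : List X) :
    Ecnt K off x0 n c = (c.map (fun z => Ecnt K off x0 n [z])).sum := by
  induction c with
  | nil => simp [Ecnt, evolve_nil, Epmf_pure]
  | cons y c ih =>
      have h : y :: c = [y] ++ c := rfl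
      rw [h, Ecnt_append, ih]; simp

/-- Expected additive functional under `iidMoves`. -/
theorem Epmf_iid (x : X) (g : X → ℝ≥0∞) (j : ℕ) :
    Epmf (iidMoves K x j) (fun l => (l.map g).sum) = j * Epmf (K x) g := by
  induction j with
  | zero =>
      show Epmf (PMF.pure []) _ = _
      rw [Epmf_pure]; simp
  | succ j ih =>
      show Epmf ((K x).bind fun y => (iidMoves K x j).bind fun l => PMF.pure (y :: l)) _ = _
      rw [Epmf_bind2pure]
      calc Epmf (K x) (fun y => Epmf (iidMoves K x j) fun l => ((y :: l).map g).sum)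
          = Epmf (K x) (fun y => g y + (j : ℝ≥0∞) * Epmf (K x) g) := by
            refine Epmf_congr _ fun y => ?_
            rw [Epmf_congr _ (fun l => by
              show ((y :: l).map g).sum = g y + (l.map g).sum; simp),
              Epmf_add, Epmf_const, ih]
        _ = Epmf (K x) g + (j : ℝ≥0∞) * Epmf (K x) g := by rw [Epmf_add, Epmf_const]
        _ = ((j + 1 : ℕ) : ℝ≥0∞) * Epmf (K x) g := by push_cast; ring

/-- Mean number of offspring at `x` (in `ℝ≥0∞`). -/
noncomputable def moff (x : X) : ℝ≥0∞ := Epmf (off x) (fun j => (j : ℝ≥0∞))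

theorem Ecnt_succ (n : ℕ) (x : X) :
    Ecnt K off x0 (n+1) [x]
      = moff off x * Epmf (K x) (fun z => Ecnt K off x0 n [z]) := by
  have h1 : Ecnt K off x0 (n+1) [x]
      = Epmf (branchStep K off x) (fun l => Ecnt K off x0 n l) := by
    rw [Ecnt]
    show Epmf ((configStep K off [x]).bind (evolve K off n)) _ = _
    rw [configStep_singleton, Epmf_bind]
    rfl
  rw [h1, branchStep, Epmf_bind]
  calc Epmf (off x) (fun j => Epmf (iidMoves K x j) fun l => Ecnt K off x0 n l)
      = Epmf (off x) (fun j => (j : ℝ≥0∞) * Epmf (K x) (fun z => Ecnt K off x0 n [z])) := by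
        refine Epmf_congr _ fun j => ?_
        rw [Epmf_congr _ (fun l => Ecnt_list K off x0 n l), Epmf_iid]
    _ = _ := by rw [Epmf_mul_const, moff]

theorem Ecnt_single (M : ℝ≥0∞) (hM : ∀ x, moff off x = M) (n : ℕ) (x : X) :
    Ecnt K off x0 n [x] = M ^ n * kpow K n x x0 := by
  induction n generalizing x with
  | zero =>
      show Epmf (PMF.pure [x]) _ = _
      rw [Epmf_pure, pow_zero, one_mul]
      show ((List.count x0 [x] : ℕ) : ℝ≥0∞) = if x = x0 then 1 else 0
      by_cases h : x = x0
      · subst h; simp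
      · simp [List.count_singleton', Ne.symm h, h]
  | succ n ih =>
      rw [Ecnt_succ, hM]
      show M * Epmf (K x) (fun z => Ecnt K off x0 n [z]) = M ^ (n+1) * ∑' z, K x z * kpow K n z x0
      rw [Epmf_congr _ (fun z => ih z)]
      rw [Epmf, ← ENNReal.tsum_mul_left]
      rw [show M ^ (n+1) * ∑' z, K x z * kpow K n z x0
          = ∑' z, M ^ (n+1) * (K x z * kpow K n z x0) from (ENNReal.tsum_mul_left).symm]
      refine tsum_congr fun z => ?_
      ring

/-- Probability that no particle is at `x0` at time `n`, starting from `c`. -/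
noncomputable def Qav (n : ℕ) (c : List X) : ℝ≥0∞ :=
  Epmf (evolve K off n c) (fun d => if x0 ∈ d then 0 else 1)

theorem Qav_le_one (n : ℕ) (c : List X) : Qav K off x0 n c ≤ 1 :=
  Epmf_le_one _ fun d => by split <;> simp

theorem Qav_append (n : ℕ) (c₁ c₂ : List X) :
    Qav K off x0 n (c₁ ++ c₂) = Qav K off x0 n c₁ * Qav K off x0 n c₂ := by
  rw [Qav, evolve_append, Epmf_bind2pure]
  calc Epmf (evolve K off n c₁)
        (fun d₁ => Epmf (evolve K off n c₂) fun d₂ => if x0 ∈ d₁ ++ d₂ then 0 else 1)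
      = Epmf (evolve K off n c₁)
        (fun d₁ => (if x0 ∈ d₁ then 0 else 1) * Qav K off x0 n c₂) := by
        refine Epmf_congr _ fun d₁ => ?_
        rw [Epmf_congr _ (fun d₂ => by
          show (if x0 ∈ d₁ ++ d₂ then (0:ℝ≥0∞) else 1)
            = (if x0 ∈ d₁ then 0 else 1) * (if x0 ∈ d₂ then 0 else 1)
          by_cases h₁ : x0 ∈ d₁ <;> by_cases h₂ : x0 ∈ d₂ <;>
            simp [List.mem_append, h₁, h₂])]
        rw [Epmf_const_mul]
        rfl
    _ = _ := by rw [Epmf_mul_const]; rfl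

theorem Qav_nil (n : ℕ) : Qav K off x0 n [] = 1 := by
  rw [Qav, evolve_nil, Epmf_pure]; simp

theorem Qav_zero : Qav K off x0 0 [x0] = 0 := by
  rw [Qav]
  show Epmf (PMF.pure [x0]) _ = 0
  rw [Epmf_pure]; simp

theorem Qav_pow (n : ℕ) (c : List X) :
    Qav K off x0 n c ≤ (Qav K off x0 n [x0]) ^ (c.count x0) := by
  induction c with
  | nil => rw [Qav_nil]; simp
  | cons y c ih =>
      have h : y :: c = [y] ++ c := rfl
      rw [h, Qav_append, List.count_append, pow_add]
      refine mul_le_mul' ?_ ih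
      by_cases hy : y = x0
      · have h1 : List.count x0 [y] = 1 := by simp [List.count_singleton', hy]
        rw [h1, pow_one, hy]
      · have h0 : List.count x0 [y] = 0 := by simp [List.count_singleton', hy]
        rw [h0, pow_zero]
        exact Qav_le_one K off x0 n [y]

/-- The generating-function-type functional of the time-`k` configuration. -/
noncomputable def genF (k : ℕ) (s : ℝ≥0∞) : ℝ≥0∞ :=
  Epmf (evolve K off k [x0]) (fun c => s ^ (c.count x0))

theorem genF_mono (k : ℕ) {s t : ℝ≥0∞} (h : s ≤ t) :
    genF K off x0 k s ≤ genF K off x0 k t :=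
  Epmf_mono _ fun c => pow_le_pow_left' h _

theorem Qav_rec (k n : ℕ) :
    Qav K off x0 (k + n) [x0] ≤ genF K off x0 k (Qav K off x0 n [x0]) := by
  rw [Qav, evolve_add, Epmf_bind]
  refine Epmf_mono _ fun c => ?_
  exact Qav_pow K off x0 n c

theorem Qav_le_fixed (k : ℕ) (s : ℝ≥0∞) (hs : genF K off x0 k s ≤ s)
    (N : ℕ) : Qav K off x0 (N * k) [x0] ≤ s := by
  induction N with
  | zero => rw [Nat.zero_mul, Qav_zero]; exact zero_le
  | succ N ih =>
      have h : (N + 1) * k = k + N * k := by ring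
      rw [h]
      calc Qav K off x0 (k + N * k) [x0] ≤ genF K off x0 k (Qav K off x0 (N * k) [x0]) :=
            Qav_rec K off x0 k (N * k)
        _ ≤ genF K off x0 k s := genF_mono K off x0 k ih
        _ ≤ s := hs

end count




theorem kpow_ne_top {X : Type} (K : X → PMF X) [DecidableEq X] (n : ℕ) (x y : X) :
    kpow K n x y ≠ ⊤ :=
  (lt_of_le_of_lt (kpow_le_one K n x y) ENNReal.one_lt_top).ne

theorem matPow_eq {X : Type} (K : X → PMF X) [DecidableEq X] (n : ℕ) (x y : X) :
    matPow (kerReal K) n x y = (kpow K n x y).toReal := by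
  induction n generalizing x with
  | zero =>
      show (if x = y then (1:ℝ) else 0) = (if x = y then (1:ℝ≥0∞) else 0).toReal
      split <;> simp
  | succ n ih =>
      show (∑' z, kerReal K x z * matPow (kerReal K) n z y) = (∑' z, K x z * kpow K n z y).toReal
      rw [ENNReal.tsum_toReal_eq (fun z =>
        ENNReal.mul_ne_top (PMF.apply_ne_top _ _) (kpow_ne_top K n z y))]
      refine tsum_congr fun z => ?_
      rw [ih, kerReal, ENNReal.toReal_mul]

theorem matPow_nonneg {X : Type} (K : X → PMF X) [DecidableEq X] (n : ℕ) (x y : X) :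
    0 ≤ matPow (kerReal K) n x y := by rw [matPow_eq]; exact ENNReal.toReal_nonneg

theorem matPow_le_one {X : Type} (K : X → PMF X) [DecidableEq X] (n : ℕ) (x y : X) :
    matPow (kerReal K) n x y ≤ 1 := by
  rw [matPow_eq]
  exact ENNReal.toReal_le_of_le_ofReal zero_le_one (by simpa using kpow_le_one K n x y)

/-- Part 1: existence of a supercritical observation period `k`. -/
theorem exists_supercritical_k {X : Type} (K : X → PMF X) [DecidableEq X] (x0 : X) (m : ℝ)
    (hρ0 : 0 < specRad (kerReal K) x0)
    (hm : 1 / specRad (kerReal K) x0 < m) :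
    ∃ k : ℕ, 1 ≤ k ∧ 1 < matPow (kerReal K) k x0 x0 * m ^ k := by
  set ρ := specRad (kerReal K) x0 with hρ_def
  have hm0 : 0 < m := lt_of_le_of_lt (by positivity) hm
  have hρm : 1 / m < ρ := by
    rw [div_lt_iff₀ hm0]
    rw [div_lt_iff₀ hρ0] at hm
    nlinarith
  set c : ℝ := (1/m + ρ) / 2 with hc_def
  have hc0 : 0 < c := by positivity
  have hcρ : c < ρ := by rw [hc_def]; linarith
  have hcm : 1 < c * m := by
    rw [hc_def]
    have : 1/m * m = 1 := by field_simp
    nlinarith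
  have hbdd : IsCoboundedUnder (· ≤ ·) atTop
      (fun n : ℕ => (matPow (kerReal K) n x0 x0) ^ ((n : ℝ)⁻¹)) := by
    refine Filter.IsBoundedUnder.isCoboundedUnder_le ?_
    refine ⟨0, Filter.eventually_map.mpr (Filter.Eventually.of_forall fun n => ?_)⟩
    exact Real.rpow_nonneg (matPow_nonneg K n x0 x0) _
  have hfreq : ∃ᶠ n in atTop, c < (matPow (kerReal K) n x0 x0) ^ ((n : ℝ)⁻¹) :=
    frequently_lt_of_lt_limsup hbdd (by rw [← hρ_def] at *; exact hcρ)
  obtain ⟨k, hk1, hk⟩ := (hfreq.and_eventually (eventually_ge_atTop 1)).exists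
  refine ⟨k, hk, ?_⟩
  have hknz : (k : ℝ) ≠ 0 := by positivity
  have hpow : c ^ (k : ℕ) < matPow (kerReal K) k x0 x0 := by
    have h1 : c ^ ((k : ℝ)) < ((matPow (kerReal K) k x0 x0) ^ ((k : ℝ)⁻¹)) ^ (k : ℝ) :=
      Real.rpow_lt_rpow hc0.le hk1 (by positivity)
    rw [← Real.rpow_natCast c k]
    rwa [← Real.rpow_mul (matPow_nonneg K k x0 x0), inv_mul_cancel₀ hknz,
      Real.rpow_one] at h1
  calc (1:ℝ) = 1 ^ k := (one_pow k).symm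
    _ < (c * m) ^ k := pow_lt_pow_left₀ hcm zero_le_one (by omega)
    _ = c ^ k * m ^ k := mul_pow c m k
    _ ≤ matPow (kerReal K) k x0 x0 * m ^ k := by
        have : (0:ℝ) < m ^ k := by positivity
        nlinarith [hpow]



end BMCwork

namespace BMCwork

theorem aux_pow {σ : ℝ} (h0 : 0 ≤ σ) (h1 : σ ≤ 1) :
    ∀ j : ℕ, σ ^ (j + 1) + (1 - σ) * j * σ ^ j ≤ σ := by
  intro j
  induction j with
  | zero => simp [pow_one]
  | succ j ih =>
      have hp : σ ^ (j+1) ≤ σ := by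
        calc σ ^ (j+1) ≤ σ ^ 1 := pow_le_pow_of_le_one h0 h1 (by omega)
        _ = σ := pow_one σ
      have hpj : 0 ≤ σ ^ j := pow_nonneg h0 j
      have e1 : σ ^ (j+2) + (1 - σ) * (↑(j+1)) * σ ^ (j+1)
          = σ * (σ ^ (j+1) + (1 - σ) * j * σ ^ j) + (1 - σ) * σ ^ (j+1) := by
        push_cast; ring
      rw [e1]
      nlinarith [mul_le_mul_of_nonneg_left ih h0]

set_option maxHeartbeats 2000000 in
theorem gw_fixed {α : Type*} (P : PMF α) (Z : α → ℕ)
    (hμ : 1 < ∑' c, P c * (Z c : ℝ≥0∞)) :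
    ∃ σ : ℝ, 0 ≤ σ ∧ σ < 1 ∧
      (∑' c, P c * (ENNReal.ofReal σ) ^ Z c) ≤ ENNReal.ofReal σ := by
  classical
  set a : α → ℝ := fun c => (P c).toReal with ha_def
  have ha0 : ∀ c, 0 ≤ a c := fun c => ENNReal.toReal_nonneg
  have hPne : ∀ c, P c ≠ ⊤ := fun c => (P.apply_ne_top c)
  have hasum : Summable a := by
    refine ENNReal.summable_toReal ?_
    rw [P.tsum_coe]; exact ENNReal.one_ne_top
  have hasum1 : ∑' c, a c = 1 := by
    rw [ha_def, ← ENNReal.tsum_toReal_eq hPne, P.tsum_coe, ENNReal.toReal_one]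
  -- extract a finite supercritical core
  rw [ENNReal.tsum_eq_iSup_sum] at hμ
  obtain ⟨F₀, hF₀⟩ := lt_iSup_iff.mp hμ
  set F : Finset α := F₀.filter (fun c => 0 < Z c) with hF_def
  have hFfilter : ∀ c ∈ F, 0 < Z c := fun c hc => (Finset.mem_filter.mp hc).2
  have hFsum : 1 < ∑ c ∈ F, P c * (Z c : ℝ≥0∞) := by
    rw [hF_def, Finset.sum_filter_of_ne]
    · exact hF₀
    · intro c _ hne
      by_contra hz
      have hz0 : Z c = 0 := by omega
      simp [hz0] at hne
  have hFne_top : (∑ c ∈ F, P c * (Z c : ℝ≥0∞)) ≠ ⊤ := by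
    refine (ENNReal.sum_lt_top.mpr fun c _ => ?_).ne
    exact ENNReal.mul_lt_top (lt_of_le_of_ne le_top (hPne c)) (by simp)
  set A : ℝ := ∑ c ∈ F, a c * (Z c : ℝ) with hA_def
  have hA : 1 < A := by
    have := (ENNReal.toReal_lt_toReal ENNReal.one_ne_top hFne_top).mpr hFsum
    rw [ENNReal.toReal_one, ENNReal.toReal_sum (fun c _ => by
      exact ENNReal.mul_ne_top (hPne c) (by simp))] at this
    simpa [ha_def, ENNReal.toReal_mul] using this
  set B : ℝ := ∑ c ∈ F, a c with hB_def
  set p0 : ℝ := ∑' c, (if Z c = 0 then a c else 0) with hp0_def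
  have hg0sum : Summable (fun c => if Z c = 0 then a c else 0) := by
    refine Summable.of_nonneg_of_le (fun c => by positivity) (fun c => ?_) hasum
    split <;> simp [ha0]
  have hp0_nonneg : 0 ≤ p0 := tsum_nonneg fun c => by positivity
  have hBp0 : B + p0 ≤ 1 := by
    have hg1sum : Summable (fun c => if c ∈ F then a c else 0) :=
      Summable.of_nonneg_of_le (fun c => by positivity) (fun c => by split <;> simp [ha0]) hasum
    have hB_eq : B = ∑' c, (if c ∈ F then a c else 0) := by
      rw [tsum_eq_sum (s := F) (fun c hc => if_neg hc)]
      exact (Finset.sum_congr rfl fun c hc => (if_pos hc).symm)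
    rw [hB_eq, hp0_def, ← Summable.tsum_add hg1sum hg0sum, ← hasum1]
    refine Summable.tsum_le_tsum (fun c => ?_) (hg1sum.add hg0sum) hasum
    by_cases hc : c ∈ F
    · have hzc : ¬ (Z c = 0) := (hFfilter c hc).ne'
      simp [hc, hzc]
    · rw [if_neg hc, zero_add]
      split
      exacts [le_rfl, ha0 c]
  have hAB : p0 < A - B := by linarith
  have hABpos : 0 < A - B := lt_of_le_of_lt hp0_nonneg hAB
  set J : ℕ := F.sup Z with hJ_def
  have hJle : ∀ c ∈ F, Z c ≤ J := fun c hc => Finset.le_sup hc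
  have hJ2 : 2 ≤ J := by
    by_contra h
    have hAle : A ≤ B := by
      rw [hA_def, hB_def]
      refine Finset.sum_le_sum fun c hc => ?_
      have h1 : Z c ≤ 1 := le_trans (hJle c hc) (by omega)
      have : (Z c : ℝ) ≤ 1 := by exact_mod_cast h1
      nlinarith [ha0 c]
    linarith
  set c₀ : ℝ := p0 / (A - B) with hc₀_def
  have hc₀0 : 0 ≤ c₀ := div_nonneg hp0_nonneg hABpos.le
  have hc₀1 : c₀ < 1 := (div_lt_one hABpos).mpr hAB
  set ε : ℝ := (1 - c₀) / (J - 1 : ℝ) with hε_def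
  have hJ1 : (1 : ℝ) ≤ (J : ℝ) - 1 := by
    have : (2:ℝ) ≤ (J:ℝ) := by exact_mod_cast hJ2
    linarith
  have hε0 : 0 < ε := div_pos (by linarith) (by linarith)
  have hε1 : ε ≤ 1 := by
    rw [hε_def, div_le_one (by linarith)]
    linarith
  set σ : ℝ := 1 - ε with hσ_def
  have hσ0 : 0 ≤ σ := by linarith
  have hσ1 : σ < 1 := by linarith
  have hcast : ((J - 1 : ℕ) : ℝ) = (J : ℝ) - 1 := by
    have : 1 ≤ J := by omega
    push_cast [this]; ring
  have hσJ : c₀ ≤ σ ^ (J - 1) := by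
    have hb := one_add_mul_le_pow (a := -ε) (by linarith) (J - 1)
    have he : 1 + ((J - 1 : ℕ) : ℝ) * (-ε) = c₀ := by
      rw [hcast, hε_def]
      field_simp
      ring
    rw [he] at hb
    simpa [hσ_def, sub_eq_add_neg] using hb
  refine ⟨σ, hσ0, hσ1, ?_⟩
  -- real generating function bound
  set ft : ℝ := ∑' c, a c * σ ^ Z c with hft_def
  have hl1sum : Summable (fun c => a c * σ ^ Z c) := by
    refine Summable.of_nonneg_of_le (fun c => by positivity) (fun c => ?_) hasum
    have : σ ^ Z c ≤ 1 := pow_le_one₀ hσ0 hσ1.le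
    nlinarith [ha0 c]
  set Dfin : ℝ := ∑ c ∈ F, a c * ((Z c : ℝ) - 1) * σ ^ (Z c - 1) with hD_def
  have hmain : ft + (1 - σ) * Dfin ≤ σ + (1 - σ) * p0 := by
    have hl2sum : Summable (fun c =>
        (1 - σ) * (if c ∈ F then a c * ((Z c : ℝ) - 1) * σ ^ (Z c - 1) else 0)) := by
      apply summable_of_ne_finset_zero (s := F)
      intro c hc; simp [hc]
    have hr2sum : Summable (fun c => (1 - σ) * (if Z c = 0 then a c else 0)) :=
      hg0sum.mul_left _
    have hr1sum : Summable (fun c => a c * σ) := hasum.mul_right σ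
    have hpoint : ∀ c,
        a c * σ ^ Z c + (1 - σ) * (if c ∈ F then a c * ((Z c : ℝ) - 1) * σ ^ (Z c - 1) else 0)
        ≤ a c * σ + (1 - σ) * (if Z c = 0 then a c else 0) := by
      intro c
      by_cases hc : c ∈ F
      · have hz : 0 < Z c := hFfilter c hc
        obtain ⟨j, hj⟩ : ∃ j, Z c = j + 1 := ⟨Z c - 1, by omega⟩
        have hZ0 : ¬ (Z c = 0) := by omega
        rw [if_pos hc, if_neg hZ0, hj]
        simp only [Nat.add_sub_cancel, mul_zero, add_zero]
        push_cast
        have h' : σ ^ (j+1) + (1-σ) * (j:ℝ) * σ ^ j ≤ σ := aux_pow hσ0 hσ1.le j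
        nlinarith [ha0 c, mul_le_mul_of_nonneg_left h' (ha0 c)]
      · rw [if_neg hc]
        by_cases hz : Z c = 0
        · rw [if_pos hz, hz]
          simp only [pow_zero]
          nlinarith [ha0 c]
        · rw [if_neg hz]
          have h1 : 1 ≤ Z c := by omega
          have : σ ^ Z c ≤ σ := by
            calc σ ^ Z c ≤ σ ^ 1 := pow_le_pow_of_le_one hσ0 hσ1.le h1
            _ = σ := pow_one σ
          nlinarith [ha0 c]
    have hsum_le := Summable.tsum_le_tsum hpoint (hl1sum.add hl2sum) (hr1sum.add hr2sum)
    rw [Summable.tsum_add hl1sum hl2sum, Summable.tsum_add hr1sum hr2sum] at hsum_le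
    have hL2 : (∑' c, (1 - σ) * (if c ∈ F then a c * ((Z c : ℝ) - 1) * σ ^ (Z c - 1) else 0))
        = (1 - σ) * Dfin := by
      rw [tsum_mul_left]
      congr 1
      rw [tsum_eq_sum (s := F) (fun c hc => if_neg hc)]
      exact Finset.sum_congr rfl fun c hc => if_pos hc
    have hR1 : (∑' c, a c * σ) = σ := by rw [tsum_mul_right, hasum1, one_mul]
    have hR2 : (∑' c, (1 - σ) * (if Z c = 0 then a c else 0)) = (1 - σ) * p0 := by
      rw [tsum_mul_left]
    rw [hL2, hR1, hR2] at hsum_le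
    exact hsum_le
  have hDfin : p0 ≤ Dfin := by
    have h1 : σ ^ (J - 1) * (A - B) ≤ Dfin := by
      have : Dfin ≥ ∑ c ∈ F, a c * ((Z c : ℝ) - 1) * σ ^ (J - 1) := by
        refine Finset.sum_le_sum fun c hc => ?_
        have hz : 0 < Z c := hFfilter c hc
        have hcoef : 0 ≤ a c * ((Z c : ℝ) - 1) := by
          have : (1:ℝ) ≤ (Z c : ℝ) := by exact_mod_cast hz
          nlinarith [ha0 c]
        refine mul_le_mul_of_nonneg_left ?_ hcoef
        exact pow_le_pow_of_le_one hσ0 hσ1.le (by have := hJle c hc; omega)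
      have heq : ∑ c ∈ F, a c * ((Z c : ℝ) - 1) * σ ^ (J - 1)
          = σ ^ (J - 1) * (A - B) := by
        rw [hA_def, hB_def, ← Finset.sum_sub_distrib, Finset.mul_sum]
        exact Finset.sum_congr rfl fun c hc => by ring
      linarith [heq ▸ this]
    have h2 : c₀ * (A - B) ≤ σ ^ (J - 1) * (A - B) :=
      mul_le_mul_of_nonneg_right hσJ hABpos.le
    have h3 : c₀ * (A - B) = p0 := by
      rw [hc₀_def, div_mul_cancel₀ _ hABpos.ne']
    linarith
  have hft : ft ≤ σ := by nlinarith [hmain, hDfin, hσ1]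
  -- back to ℝ≥0∞
  have hterm : ∀ c, P c * (ENNReal.ofReal σ) ^ Z c = ENNReal.ofReal (a c * σ ^ Z c) := by
    intro c
    rw [ENNReal.ofReal_mul (ha0 c), ← ENNReal.ofReal_pow hσ0, ha_def,
      ENNReal.ofReal_toReal (hPne c)]
  calc (∑' c, P c * (ENNReal.ofReal σ) ^ Z c) = ∑' c, ENNReal.ofReal (a c * σ ^ Z c) :=
        tsum_congr hterm
    _ = ENNReal.ofReal ft := by
        rw [hft_def, ENNReal.ofReal_tsum_of_nonneg (fun c => by positivity) hl1sum]
    _ ≤ ENNReal.ofReal σ := ENNReal.ofReal_le_ofReal hft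

end BMCwork
namespace BMCwork

theorem Epmf_toOuterMeasure {α : Type*} (p : PMF α) (S : Set α) [DecidablePred (· ∈ S)] :
    p.toOuterMeasure S = Epmf p (fun a => if a ∈ S then 1 else 0) := by
  rw [PMF.toOuterMeasure_apply, Epmf]
  refine tsum_congr fun a => ?_
  rw [Set.indicator_apply]
  split <;> simp

/-- Marginal of the path measure at the final time. -/
theorem bmcPaths_marginal {X : Type} [DecidableEq X] (K : X → PMF X) (off : X → PMF ℕ)
    (x0 : X) (M : ℕ) (c : List X) :
    Epmf (bmcPaths K off M c) (fun tr => if x0 ∈ tr.getD M [] then 1 else 0)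
      = Epmf (evolve K off M c) (fun d => if x0 ∈ d then 1 else 0) := by
  induction M generalizing c with
  | zero =>
      show Epmf (PMF.pure [c]) _ = Epmf (PMF.pure c) _
      rw [Epmf_pure, Epmf_pure]
      simp [List.getD]
  | succ M ih =>
      show Epmf ((configStep K off c).bind fun c' =>
        (bmcPaths K off M c').bind fun tr => PMF.pure (c :: tr)) _ = _
      rw [Epmf_bind]
      have h1 : ∀ c', Epmf ((bmcPaths K off M c').bind fun tr => PMF.pure (c :: tr))
          (fun tr => if x0 ∈ tr.getD (M+1) [] then (1:ℝ≥0∞) else 0)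
          = Epmf (evolve K off M c') (fun d => if x0 ∈ d then 1 else 0) := by
        intro c'
        rw [Epmf_bind]
        rw [Epmf_congr _ (fun tr => Epmf_pure (c :: tr) _)]
        exact ih c'
      rw [Epmf_congr _ h1]
      rw [show evolve K off (M+1) c = (configStep K off c).bind (evolve K off M) from rfl,
        Epmf_bind]

theorem moff_eq {X : Type} (off : X → PMF ℕ) (m : ℝ)
    (hmean : ∀ x, HasSum (fun k : ℕ => (k : ℝ) * ((off x) k).toReal) m) (x : X) :
    moff off x = ENNReal.ofReal m := by
  rw [moff, Epmf]
  have hsummable := (hmean x).summable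
  have h1 : ENNReal.ofReal m = ∑' j : ℕ, ENNReal.ofReal ((j:ℝ) * ((off x) j).toReal) := by
    rw [← (hmean x).tsum_eq]
    exact ENNReal.ofReal_tsum_of_nonneg (fun j => by positivity) hsummable
  rw [h1]
  refine tsum_congr fun j => ?_
  rw [ENNReal.ofReal_mul (by positivity), ENNReal.ofReal_natCast,
    ENNReal.ofReal_toReal (PMF.apply_ne_top _ _), mul_comm]

end BMCwork

open BMCwork in
/-- Let `m > 1/ρ(P)` with `ρ(P) ∈ (0,1]`. For a BMC with constant mean offspring `m`
started at `x0` there is a `k ≥ 1` with `p^{(k)}(x0,x0)·m^k > 1` (so that the pruned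
process of particles at `x0` at times `nk` dominates a supercritical Galton–Watson
process); hence `α(x0) > 0`. -/
theorem bmc_pruned_supercritical {X : Type} [Countable X] [DecidableEq X]
    (K : X → PMF X) (off : X → PMF ℕ) (m : ℝ)
    (hirr : IsIrreducibleKernel (kerReal K))
    (hoff0 : ∀ x, (off x) 0 = 0)
    (hmean : ∀ x, HasSum (fun k : ℕ => (k : ℝ) * ((off x) k).toReal) m)
    (x0 : X) (hρ0 : 0 < specRad (kerReal K) x0) (hρ1 : specRad (kerReal K) x0 ≤ 1)
    (hm : 1 / specRad (kerReal K) x0 < m) :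
    (∃ k : ℕ, 1 ≤ k ∧ 1 < matPow (kerReal K) k x0 x0 * m ^ k) ∧
    0 < alphaBMC K off x0 := by
  classical
  obtain ⟨k, hk1, hkgt⟩ := exists_supercritical_k K x0 m hρ0 hm
  refine ⟨⟨k, hk1, hkgt⟩, ?_⟩
  have hm0 : 0 < m := by
    have : (0:ℝ) < 1 / specRad (kerReal K) x0 := by positivity
    linarith
  -- the mean number of particles at x0 at time k exceeds 1
  have hμ : 1 < Ecnt K off x0 k [x0] := by
    rw [Ecnt_single K off x0 (ENNReal.ofReal m) (moff_eq off m hmean) k x0]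
    have he : (ENNReal.ofReal m) ^ k * kpow K k x0 x0
        = ENNReal.ofReal (m ^ k * matPow (kerReal K) k x0 x0) := by
      rw [ENNReal.ofReal_mul (by positivity), ← ENNReal.ofReal_pow hm0.le, matPow_eq,
        ENNReal.ofReal_toReal (kpow_ne_top K k x0 x0)]
    rw [he]
    rw [show (1:ℝ≥0∞) = ENNReal.ofReal 1 from (ENNReal.ofReal_one).symm]
    rw [ENNReal.ofReal_lt_ofReal_iff (by nlinarith [matPow_nonneg K k x0 x0])]
    nlinarith [hkgt]
  -- supercritical Galton–Watson fixed point
  obtain ⟨σ, hσ0, hσ1, hfix⟩ := gw_fixed (evolve K off k [x0]) (fun c => c.count x0) hμ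
  have hgen : genF K off x0 k (ENNReal.ofReal σ) ≤ ENNReal.ofReal σ := hfix
  have hQ : ∀ N, Qav K off x0 (N * k) [x0] ≤ ENNReal.ofReal σ :=
    Qav_le_fixed K off x0 k (ENNReal.ofReal σ) hgen
  -- occupancy probability at times N * k
  have hocc : ∀ N : ℕ, 1 - ENNReal.ofReal σ
      ≤ Epmf (evolve K off (N * k) [x0]) (fun d => if x0 ∈ d then 1 else 0) := by
    intro N
    have hsplit : Epmf (evolve K off (N * k) [x0]) (fun d => if x0 ∈ d then 1 else 0)
        + Qav K off x0 (N * k) [x0] = 1 := by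
      rw [Qav, ← Epmf_add]
      rw [Epmf_congr _ (fun d => by
        show (if x0 ∈ d then (1:ℝ≥0∞) else 0) + (if x0 ∈ d then 0 else 1) = 1
        split <;> simp)]
      exact Epmf_const _ 1
    rw [tsub_le_iff_right]
    calc (1:ℝ≥0∞) = _ + Qav K off x0 (N * k) [x0] := hsplit.symm
      _ ≤ _ + ENNReal.ofReal σ := add_le_add_right (hQ N) _
  -- conclude
  have halpha : 1 - ENNReal.ofReal σ ≤ alphaBMC K off x0 := by
    rw [alphaBMC]
    refine le_iInf fun N => ?_
    refine le_trans ?_ (le_iSup _ (N * k))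
    have hsub : {tr : List (List X) | x0 ∈ tr.getD (N * k) []}
        ⊆ {tr | ∃ n, N ≤ n ∧ x0 ∈ tr.getD n []} := by
      intro tr htr
      exact ⟨N * k, Nat.le_mul_of_pos_right N (by omega), htr⟩
    refine le_trans ?_ ((bmcPaths K off (N * k) [x0]).toOuterMeasure_mono
      (le_trans Set.inter_subset_left hsub))
    rw [Epmf_toOuterMeasure (bmcPaths K off (N * k) [x0])
      {tr : List (List X) | x0 ∈ tr.getD (N * k) []}]
    rw [Epmf_congr _ (fun tr => by
      show (if tr ∈ {tr : List (List X) | x0 ∈ tr.getD (N * k) []} then (1:ℝ≥0∞) else 0)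
        = if x0 ∈ tr.getD (N * k) [] then 1 else 0
      by_cases h : x0 ∈ tr.getD (N * k) [] <;> simp [h])]
    rw [bmcPaths_marginal K off x0 (N * k) [x0]]
    exact hocc N
  have hpos : (0:ℝ≥0∞) < 1 - ENNReal.ofReal σ := by
    rw [tsub_pos_iff_lt]
    exact ENNReal.ofReal_lt_one.mpr hσ1
  exact lt_of_lt_of_le hpos halpha
end
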